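/- Let G be a finite abelian group. If the prime index graph Π(G) is regular, then G is cyclic of squarefree order p₁⋯p_s and Π(G) is isomorphic to the hypercube graph Q_s. -/

import Mathlib

/-- The prime index graph of a group: vertices are subgroups, two distinct
subgroups are adjacent iff one is contained in the other with prime index. -/
def primeIndexGraph (G : Type*) [Group G] : SimpleGraph (Subgroup G) :=
  SimpleGraph.fromRel (fun H K => H ≤ K ∧ (H.relIndex K).Prime)

/-- The Cartesian (box) product of a finite family of graphs. -/
def boxProdPi {ι : Type*} {α : ι → Type*} (Γ : ∀ i, SimpleGraph (α i)) :
    SimpleGraph (∀ i, α i) where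
  Adj a b := ∃ i, (Γ i).Adj (a i) (b i) ∧ ∀ j, j ≠ i → a j = b j
  symm := by
    constructor
    rintro a b ⟨i, hadj, heq⟩
    exact ⟨i, hadj.symm, fun j hj => (heq j hj).symm⟩
  loopless := by
    constructor
    rintro a ⟨i, hadj, -⟩
    exact (Γ i).irrefl hadj

/-- The hypercube graph `Q s`, the box product of `s` copies of `P₂`. -/
def hypercubeGraph (s : ℕ) : SimpleGraph (Fin s → Fin 2) :=
  boxProdPi (fun _ : Fin s => SimpleGraph.pathGraph 2)

/-! ### Auxiliary lemmas -/

section Aux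

/-- the subgroup of `m`-torsion elements of a commutative group -/
def torsSub (G : Type*) [CommGroup G] (m : ℕ) : Subgroup G := (powMonoidHom m).ker

lemma mem_torsSub {G : Type*} [CommGroup G] {m : ℕ} {x : G} :
    x ∈ torsSub G m ↔ x ^ m = 1 := Iff.rfl

lemma sub_eq_of_le_of_card_le {G : Type*} [Group G] [Finite G] {H K : Subgroup G}
    (h : H ≤ K) (hc : Nat.card K ≤ Nat.card H) : H = K := by
  apply SetLike.coe_injective
  refine Set.eq_of_subset_of_ncard_le h ?_ (Set.toFinite _)
  rw [← Nat.card_coe_set_eq, ← Nat.card_coe_set_eq]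
  exact hc

lemma card_mul_relindex {G : Type*} [Group G] {H K : Subgroup G} (h : H ≤ K) :
    Nat.card H * H.relIndex K = Nat.card K := by
  have h1 := Subgroup.card_mul_index (H.subgroupOf K)
  rwa [Nat.card_congr (Subgroup.subgroupOfEquivOfLe h).toEquiv] at h1

lemma orderOf_dvd_card_subgroup {G : Type*} [Group G] {A : Subgroup G} {x : G}
    (hx : x ∈ A) : orderOf x ∣ Nat.card A :=
  Subgroup.orderOf_dvd_natCard A hx

/-- An order `p` element of a finite commutative group generates the whole subgroup
of cardinality `p` it lies in. -/
lemma eq_of_mem_of_card_eq {G : Type*} [Group G] [Finite G] {A : Subgroup G} {x : G} {p : ℕ}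
    (hp : p.Prime) (hA : Nat.card A = p) (hx : x ∈ A) (hx1 : x ≠ 1) :
    Subgroup.zpowers x = A := by
  have hord : orderOf x = p := by
    rcases hp.eq_one_or_self_of_dvd _ (hA ▸ orderOf_dvd_card_subgroup hx) with h | h
    · exact absurd (orderOf_eq_one_iff.mp h) hx1
    · exact h
  refine sub_eq_of_le_of_card_le ((Subgroup.zpowers_le ).mpr hx) ?_
  rw [Nat.card_zpowers, hord, hA]

/-- Counting formula: the number of `p`-torsion elements in terms of the number of
subgroups of order `p`. -/
lemma card_tors_eq (H : Type*) [CommGroup H] [Finite H] {p : ℕ} (hp : p.Prime) :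
    Nat.card (torsSub H p) = (p - 1) * {A : Subgroup H | Nat.card A = p}.ncard + 1 := by
  classical
  have : Fintype H := Fintype.ofFinite H
  have : Fintype (Subgroup H) := Fintype.ofFinite _
  have hset : {x : H | x ^ p = 1} = insert 1 {x : H | orderOf x = p} := by
    ext x
    simp only [Set.mem_setOf_eq, Set.mem_insert_iff]
    constructor
    · intro hx
      rcases hp.eq_one_or_self_of_dvd _ (orderOf_dvd_of_pow_eq_one hx) with h | h
      · exact Or.inl (orderOf_eq_one_iff.mp h)
      · exact Or.inr h
    · rintro (rfl | hx)
      · simp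
      · rw [← hx]; exact pow_orderOf_eq_one x
  have h1 : Nat.card (torsSub H p) = {x : H | orderOf x = p}.ncard + 1 := by
    have e1 : Nat.card (torsSub H p) = {x : H | x ^ p = 1}.ncard := by
      rw [← Nat.card_coe_set_eq]
      exact Nat.card_congr (Equiv.subtypeEquivRight (fun x => Iff.rfl))
    rw [e1, hset, Set.ncard_insert_of_notMem (by simp [hp.ne_one.symm, hp.ne_one]) (Set.toFinite _)]
  rw [h1]
  congr 1
  -- now count order-p elements fiberwise over subgroups of order p
  have hF : {x : H | orderOf x = p}.ncard
      = (Finset.univ.filter (fun x : H => orderOf x = p)).card := by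
    rw [Set.ncard_eq_toFinset_card', Set.toFinset_setOf]
  have hS : {A : Subgroup H | Nat.card A = p}.ncard
      = (Finset.univ.filter (fun A : Subgroup H => Nat.card A = p)).card := by
    rw [Set.ncard_eq_toFinset_card', Set.toFinset_setOf]
  rw [hF, hS]
  rw [Finset.card_eq_sum_card_fiberwise
    (f := fun x : H => Subgroup.zpowers x)
    (t := Finset.univ.filter (fun A : Subgroup H => Nat.card A = p))
    (by
      intro x hx
      simp only [Finset.mem_coe, Finset.mem_filter, Finset.mem_univ, true_and] at hx ⊢
      rw [Nat.card_zpowers, hx])]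
  have hconst : ∀ A ∈ Finset.univ.filter (fun A : Subgroup H => Nat.card A = p),
      (Finset.filter (fun x => Subgroup.zpowers x = A)
        (Finset.univ.filter (fun x : H => orderOf x = p))).card = p - 1 := by
    intro A hA
    simp only [Finset.mem_filter, Finset.mem_univ, true_and] at hA
    have hfib : Finset.filter (fun x => Subgroup.zpowers x = A)
        (Finset.univ.filter (fun x : H => orderOf x = p)) = (A : Set H).toFinset.erase 1 := by
      ext x
      simp only [Finset.mem_filter, Finset.mem_univ, true_and, Finset.mem_erase,
        Set.mem_toFinset, SetLike.mem_coe]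
      constructor
      · rintro ⟨hord, hz⟩
        refine ⟨fun hx1 => ?_, hz ▸ Subgroup.mem_zpowers x⟩
        rw [hx1, orderOf_one] at hord
        exact hp.ne_one hord.symm
      · rintro ⟨hx1, hxA⟩
        have hz := eq_of_mem_of_card_eq hp hA hxA hx1
        constructor
        · rcases hp.eq_one_or_self_of_dvd _ (hA ▸ orderOf_dvd_card_subgroup hxA) with h | h
          · exact absurd (orderOf_eq_one_iff.mp h) hx1
          · exact h
        · exact hz
    rw [hfib, Finset.card_erase_of_mem (by simp only [Set.mem_toFinset]; exact one_mem A),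
      ← Set.ncard_eq_toFinset_card', ← Nat.card_coe_set_eq]
    exact congrArg (fun t => t - 1) hA
  rw [Finset.sum_const_nat hconst, mul_comm]

/-- `torsSub H p` is a `p`-group. -/
lemma torsSub_card_pow (H : Type*) [CommGroup H] [Finite H] {p : ℕ} (hp : p.Prime) :
    ∃ r : ℕ, Nat.card (torsSub H p) = p ^ r := by
  have : Fact p.Prime := ⟨hp⟩
  refine (IsPGroup.iff_card).mp ?_
  intro g
  refine ⟨1, ?_⟩
  have := g.2
  rw [mem_torsSub] at this
  ext
  simp [this]

lemma torsSub_nontrivial (H : Type*) [CommGroup H] [Fintype H] {p : ℕ} (hp : p.Prime)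
    (hdvd : p ∣ Nat.card H) : 1 < Nat.card (torsSub H p) := by
  have : Fact p.Prime := ⟨hp⟩
  obtain ⟨x, hx⟩ := exists_prime_orderOf_dvd_card (G := H) p (by rwa [← Nat.card_eq_fintype_card])
  rw [Finite.one_lt_card_iff_nontrivial]
  refine ⟨⟨⟨x, ?_⟩, 1, ?_⟩⟩
  · rw [mem_torsSub, ← hx]; exact pow_orderOf_eq_one x
  · intro hcon
    apply hp.ne_one
    rw [Subtype.ext_iff] at hcon
    rw [← hx, show x = (1 : H) from hcon, orderOf_one]

lemma card_map_mk' {G : Type*} [CommGroup G] [Finite G] (A K : Subgroup G) (hAK : A ≤ K) :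
    Nat.card (K.map (QuotientGroup.mk' A)) * Nat.card A = Nat.card K := by
  set f := (QuotientGroup.mk' A).comp K.subtype with hf
  have hrange : f.range = K.map (QuotientGroup.mk' A) := by
    rw [hf, MonoidHom.range_comp, Subgroup.range_subtype]
  have hker : f.ker = A.subgroupOf K := by
    rw [hf, ← MonoidHom.comap_ker, QuotientGroup.ker_mk']
    rfl
  have h1 := Subgroup.card_eq_card_quotient_mul_card_subgroup f.ker
  have h2 : Nat.card (K ⧸ f.ker) = Nat.card f.range :=
    Nat.card_congr (QuotientGroup.quotientKerEquivRange f).toEquiv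
  have h3 : Nat.card f.ker = Nat.card A := by
    rw [hker]; exact Nat.card_congr (Subgroup.subgroupOfEquivOfLe hAK).toEquiv
  rw [← hrange, ← h2, ← h3, ← h1]

/-- correspondence: subgroups of order `p²` containing `A` correspond to order-`p`
subgroups of `G ⧸ A`. -/
lemma theta {G : Type*} [CommGroup G] [Finite G] {A : Subgroup G} {p : ℕ} (hp : p.Prime)
    (hA : Nat.card A = p) :
    {K : Subgroup G | Nat.card K = p ^ 2 ∧ A ≤ K}.ncard
      = {L : Subgroup (G ⧸ A) | Nat.card L = p}.ncard := by
  have hsurj := QuotientGroup.mk'_surjective A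
  have hkerle : ∀ L : Subgroup (G ⧸ A), A ≤ L.comap (QuotientGroup.mk' A) := by
    intro L x hx
    have : (QuotientGroup.mk' A) x = 1 := by
      rw [← MonoidHom.mem_ker, QuotientGroup.ker_mk']; exact hx
    rw [Subgroup.mem_comap, this]
    exact one_mem L
  rw [← Nat.card_coe_set_eq, ← Nat.card_coe_set_eq]
  apply Nat.card_congr
  refine ⟨fun K => ⟨K.1.map (QuotientGroup.mk' A), ?_⟩,
    fun L => ⟨L.1.comap (QuotientGroup.mk' A), ?_⟩, ?_, ?_⟩
  · obtain ⟨hcard, hle⟩ := K.2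
    have h := card_map_mk' A K.1 hle
    rw [hcard, hA] at h
    show Nat.card (K.1.map (QuotientGroup.mk' A)) = p
    exact Nat.eq_of_mul_eq_mul_right hp.pos (by rw [h, sq])
  · have hcard := L.2
    constructor
    · have h := card_map_mk' A (L.1.comap (QuotientGroup.mk' A)) (hkerle L.1)
      rw [Subgroup.map_comap_eq_self_of_surjective hsurj, hcard, hA, ← sq] at h
      exact h.symm
    · exact hkerle L.1
  · rintro ⟨K, hK⟩
    apply Subtype.ext
    show (K.map (QuotientGroup.mk' A)).comap (QuotientGroup.mk' A) = K
    rw [Subgroup.comap_map_eq, QuotientGroup.ker_mk']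
    exact sup_eq_left.mpr hK.2
  · rintro ⟨L, hL⟩
    exact Subtype.ext (Subgroup.map_comap_eq_self_of_surjective hsurj _)

end Aux

section Aux2

open scoped Pointwise

variable {G : Type*} [CommGroup G] [Finite G]

lemma pow_card_mem_eq_one {B : Subgroup G} {x : G} (hx : x ∈ B) :
    x ^ Nat.card B = 1 :=
  orderOf_dvd_iff_pow_eq_one.mp (Subgroup.orderOf_dvd_natCard B hx)

lemma card_sup_of_coprime_primes {A B : Subgroup G} {p q : ℕ}
    (hp : p.Prime) (hq : q.Prime) (hne : p ≠ q)
    (hA : Nat.card A = p) (hB : Nat.card B = q) :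
    Nat.card (A ⊔ B : Subgroup G) = p * q := by
  have hd1 : p ∣ Nat.card (A ⊔ B : Subgroup G) := hA ▸ Subgroup.card_dvd_of_le le_sup_left
  have hd2 : q ∣ Nat.card (A ⊔ B : Subgroup G) := hB ▸ Subgroup.card_dvd_of_le le_sup_right
  have hdvd : p * q ∣ Nat.card (A ⊔ B : Subgroup G) :=
    Nat.Coprime.mul_dvd_of_dvd_of_dvd ((Nat.coprime_primes hp hq).mpr hne) hd1 hd2
  have hle : Nat.card (A ⊔ B : Subgroup G) ≤ p * q := by
    have hmul : ((A ⊔ B : Subgroup G) : Set G) = (A : Set G) * (B : Set G) :=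
      Subgroup.mul_normal A B
    calc Nat.card (A ⊔ B : Subgroup G)
        = Nat.card (((A ⊔ B : Subgroup G) : Set G) : Type _) := by
          rw [SetLike.coe_sort_coe]
      _ ≤ p * q := by
          rw [hmul, ← hA, ← hB]
          calc Nat.card ((A : Set G) * (B : Set G) : Set G)
              ≤ Nat.card ((A : Set G) : Type _) * Nat.card ((B : Set G) : Type _) :=
                Set.natCard_mul_le
            _ = Nat.card A * Nat.card B := by rw [SetLike.coe_sort_coe, SetLike.coe_sort_coe]
  exact Nat.le_antisymm hle (Nat.le_of_dvd Nat.card_pos hdvd)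

lemma card_inf_tors {K : Subgroup G} {p q : ℕ}
    (hp : p.Prime) (hq : q.Prime) (hne : p ≠ q) (hK : Nat.card K = p * q) :
    Nat.card (K ⊓ torsSub G q : Subgroup G) = q := by
  have : Fact q.Prime := ⟨hq⟩
  have hpg : IsPGroup q (K ⊓ torsSub G q : Subgroup G) := by
    intro g
    have hg : (g : G) ^ q = 1 := (Subgroup.mem_inf.mp g.2).2
    refine ⟨1, Subtype.ext ?_⟩
    rw [pow_one, SubmonoidClass.coe_pow, OneMemClass.coe_one]
    exact hg
  obtain ⟨m, hm⟩ := (IsPGroup.iff_card).mp hpg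
  have hdvd : q ^ m ∣ p * q := by
    rw [← hm, ← hK]
    exact Subgroup.card_dvd_of_le inf_le_left
  have hcop : (q ^ m).Coprime p := Nat.Coprime.pow_left m ((Nat.coprime_primes hq hp).mpr hne.symm)
  have hq' : q ^ m ∣ q := hcop.dvd_of_dvd_mul_left hdvd
  have : Fintype K := Fintype.ofFinite _
  obtain ⟨g, hg⟩ := exists_prime_orderOf_dvd_card (G := K) q
    (by rw [← Nat.card_eq_fintype_card, hK]; exact dvd_mul_left q p)
  have hgG : orderOf (g : G) = q := by
    rw [← hg]
    exact orderOf_injective K.subtype K.subtype_injective g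
  have hmem : (g : G) ∈ K ⊓ torsSub G q :=
    Subgroup.mem_inf.mpr ⟨g.2, by rw [mem_torsSub, ← hgG]; exact pow_orderOf_eq_one _⟩
  have hne1 : (g : G) ≠ 1 := by
    intro hcon
    rw [hcon, orderOf_one] at hgG
    exact hq.ne_one hgG.symm
  have h2 : 1 < Nat.card (K ⊓ torsSub G q : Subgroup G) := by
    rw [Finite.one_lt_card_iff_nontrivial]
    exact ⟨⟨⟨_, hmem⟩, 1, fun hcon => hne1 (congrArg Subtype.val hcon)⟩⟩
  rw [hm] at h2 ⊢
  rcases hq.eq_one_or_self_of_dvd _ hq' with h | h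
  · omega
  · exact h

lemma inf_tors_of_le {K B : Subgroup G} {p q : ℕ} (hp : p.Prime) (hq : q.Prime)
    (hpq : p ≠ q) (hB : Nat.card B = q) (hle : B ≤ K) (hK : Nat.card K = p * q) :
    B = K ⊓ torsSub G q := by
  refine sub_eq_of_le_of_card_le (le_inf hle ?_) ?_
  · intro x hx
    rw [mem_torsSub, ← hB]
    exact pow_card_mem_eq_one hx
  · rw [card_inf_tors hp hq hpq hK, hB]

lemma nbhd_bot_eq (G : Type*) [Group G] :
    (primeIndexGraph G).neighborSet ⊥ = {B : Subgroup G | (Nat.card B).Prime} := by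
  ext B
  simp only [SimpleGraph.mem_neighborSet, primeIndexGraph, SimpleGraph.fromRel_adj,
    Set.mem_setOf_eq]
  constructor
  · rintro ⟨hne, ⟨-, hpr⟩ | ⟨hle, -⟩⟩
    · rwa [Subgroup.relIndex_bot_left] at hpr
    · exact absurd (le_bot_iff.mp hle).symm hne
  · intro hB
    have hBne : B ≠ ⊥ := by
      intro hcon
      rw [hcon, Subgroup.card_bot] at hB
      exact Nat.not_prime_one hB
    exact ⟨Ne.symm hBne, Or.inl ⟨bot_le, by rwa [Subgroup.relIndex_bot_left]⟩⟩

lemma nbhd_A_eq {A : Subgroup G} {p : ℕ} (hp : p.Prime) (hA : Nat.card A = p) :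
    (primeIndexGraph G).neighborSet A
      = insert ⊥ {K : Subgroup G | A < K ∧ (A.relIndex K).Prime} := by
  ext K
  simp only [SimpleGraph.mem_neighborSet, primeIndexGraph, SimpleGraph.fromRel_adj,
    Set.mem_insert_iff, Set.mem_setOf_eq]
  constructor
  · rintro ⟨hne, ⟨hle, hpr⟩ | ⟨hle, hpr⟩⟩
    · exact Or.inr ⟨lt_of_le_of_ne hle hne, hpr⟩
    · left
      rcases hp.eq_one_or_self_of_dvd _ (hA ▸ Subgroup.card_dvd_of_le hle) with h | h
      · exact Subgroup.card_eq_one.mp h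
      · exact absurd (sub_eq_of_le_of_card_le hle (by rw [h, hA])) (Ne.symm hne)
  · rintro (rfl | ⟨hlt, hpr⟩)
    · refine ⟨fun hcon => ?_, Or.inr ⟨bot_le, ?_⟩⟩
      · rw [hcon, Subgroup.card_bot] at hA
        exact hp.ne_one hA.symm
      · rwa [Subgroup.relIndex_bot_left, hA]
    · exact ⟨(ne_of_lt hlt), Or.inl ⟨hlt.le, hpr⟩⟩

end Aux2

section MainA

variable {G : Type*} [CommGroup G] [Fintype G]

lemma not_sq_dvd
    (h : ∃ d : ℕ, ∀ H : Subgroup G, ((primeIndexGraph G).neighborSet H).ncard = d)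
    {p : ℕ} (hp : p.Prime) : ¬ (p * p ∣ Nat.card G) := by
  intro hsq
  obtain ⟨d, hd⟩ := h
  have : Fact p.Prime := ⟨hp⟩
  have h2p := hp.two_le
  obtain ⟨x, hx⟩ := exists_prime_orderOf_dvd_card (G := G) p
    (by rw [← Nat.card_eq_fintype_card]; exact dvd_trans (dvd_mul_right p p) hsq)
  have hA : Nat.card (Subgroup.zpowers x) = p := by rw [Nat.card_zpowers, hx]
  set A : Subgroup G := Subgroup.zpowers x with hAdef
  -- decomposition of the neighbour set of ⊥
  have hbot : ((primeIndexGraph G).neighborSet ⊥).ncard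
      = {B : Subgroup G | Nat.card B = p}.ncard
        + {B : Subgroup G | (Nat.card B).Prime ∧ Nat.card B ≠ p}.ncard := by
    rw [nbhd_bot_eq]
    have hu : {B : Subgroup G | (Nat.card B).Prime}
        = {B : Subgroup G | Nat.card B = p}
          ∪ {B : Subgroup G | (Nat.card B).Prime ∧ Nat.card B ≠ p} := by
      ext B
      simp only [Set.mem_setOf_eq, Set.mem_union]
      constructor
      · intro hpr
        by_cases hBp : Nat.card B = p
        · exact Or.inl hBp
        · exact Or.inr ⟨hpr, hBp⟩
      · rintro (hBp | ⟨hpr, -⟩)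
        · rw [hBp]; exact hp
        · exact hpr
    rw [hu, Set.ncard_union_eq ?_ (Set.toFinite _) (Set.toFinite _)]
    rw [Set.disjoint_left]
    rintro B hB1 hB2
    exact hB2.2 hB1
  -- decomposition of the neighbour set of A
  have hrelp : ∀ K : Subgroup G, Nat.card K = p ^ 2 → A ≤ K → A.relIndex K = p := by
    intro K hcard hle
    have hm := card_mul_relindex hle
    rw [hA, hcard, sq] at hm
    exact Nat.eq_of_mul_eq_mul_left hp.pos hm
  have hAnb : ((primeIndexGraph G).neighborSet A).ncard
      = 1 + ({K : Subgroup G | Nat.card K = p ^ 2 ∧ A ≤ K}.ncard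
        + {K : Subgroup G | A < K ∧ (A.relIndex K).Prime ∧ A.relIndex K ≠ p}.ncard) := by
    rw [nbhd_A_eq hp hA]
    have hsplit : {K : Subgroup G | A < K ∧ (A.relIndex K).Prime}
        = {K : Subgroup G | Nat.card K = p ^ 2 ∧ A ≤ K}
          ∪ {K : Subgroup G | A < K ∧ (A.relIndex K).Prime ∧ A.relIndex K ≠ p} := by
      ext K
      simp only [Set.mem_setOf_eq, Set.mem_union]
      constructor
      · rintro ⟨hlt, hpr⟩
        by_cases hrel : A.relIndex K = p
        · refine Or.inl ⟨?_, hlt.le⟩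
          rw [← card_mul_relindex hlt.le, hA, hrel, sq]
        · exact Or.inr ⟨hlt, hpr, hrel⟩
      · rintro (⟨hcard, hle⟩ | ⟨hlt, hpr, -⟩)
        · have hrel := hrelp K hcard hle
          refine ⟨lt_of_le_of_ne hle (fun hcon => ?_), by rw [hrel]; exact hp⟩
          rw [← hcon, hA, sq] at hcard
          nlinarith
        · exact ⟨hlt, hpr⟩
    have hdis : Disjoint {K : Subgroup G | Nat.card K = p ^ 2 ∧ A ≤ K}
        {K : Subgroup G | A < K ∧ (A.relIndex K).Prime ∧ A.relIndex K ≠ p} := by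
      rw [Set.disjoint_left]
      rintro K ⟨hcard, hle⟩ ⟨-, -, hrel⟩
      exact hrel (hrelp K hcard hle)
    have hbotnot : (⊥ : Subgroup G) ∉ {K : Subgroup G | A < K ∧ (A.relIndex K).Prime} := by
      rintro ⟨hlt, -⟩
      exact not_lt_bot hlt
    rw [hsplit] at hbotnot ⊢
    rw [Set.ncard_insert_of_notMem hbotnot (Set.toFinite _),
      Set.ncard_union_eq hdis (Set.toFinite _) (Set.toFinite _)]
    omega
  -- the sets of "other prime" neighbours of A and of ⊥ are in bijection via B ↦ A ⊔ B
  have hWSo : {K : Subgroup G | A < K ∧ (A.relIndex K).Prime ∧ A.relIndex K ≠ p}.ncard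
      = {B : Subgroup G | (Nat.card B).Prime ∧ Nat.card B ≠ p}.ncard := by
    have hcard_sup : ∀ B : Subgroup G, (Nat.card B).Prime → Nat.card B ≠ p →
        Nat.card (A ⊔ B : Subgroup G) = p * Nat.card B := fun B hq hqp =>
      card_sup_of_coprime_primes hp hq (Ne.symm hqp) hA rfl
    have hmaps : ∀ B : Subgroup G, (Nat.card B).Prime → Nat.card B ≠ p →
        A < A ⊔ B ∧ A.relIndex (A ⊔ B) = Nat.card B := by
      intro B hq hqp
      have hsup := hcard_sup B hq hqp
      have hrel : A.relIndex (A ⊔ B) = Nat.card B := by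
        have hm := card_mul_relindex (le_sup_left : A ≤ A ⊔ B)
        rw [hA, hsup] at hm
        exact Nat.eq_of_mul_eq_mul_left hp.pos hm
      refine ⟨lt_of_le_of_ne le_sup_left (fun hcon => ?_), hrel⟩
      have := hq.two_le
      rw [← hcon, hA] at hsup
      nlinarith
    have hbij : Set.BijOn (fun B : Subgroup G => A ⊔ B)
        {B : Subgroup G | (Nat.card B).Prime ∧ Nat.card B ≠ p}
        {K : Subgroup G | A < K ∧ (A.relIndex K).Prime ∧ A.relIndex K ≠ p} := by
      refine ⟨?_, ?_, ?_⟩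
      · rintro B ⟨hq, hqp⟩
        obtain ⟨hlt, hrel⟩ := hmaps B hq hqp
        exact ⟨hlt, by rw [hrel]; exact hq, by rw [hrel]; exact hqp⟩
      · rintro B1 ⟨hq1, hqp1⟩ B2 ⟨hq2, hqp2⟩ hsup
        simp only at hsup
        have hc1 := hcard_sup B1 hq1 hqp1
        have hc2 := hcard_sup B2 hq2 hqp2
        rw [hsup, hc2] at hc1
        have hqq : Nat.card B2 = Nat.card B1 :=
          Nat.eq_of_mul_eq_mul_left hp.pos hc1
        rw [inf_tors_of_le hp hq1 (Ne.symm hqp1) rfl le_sup_right (hcard_sup B1 hq1 hqp1),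
          inf_tors_of_le hp hq2 (Ne.symm hqp2) rfl le_sup_right (hcard_sup B2 hq2 hqp2), hsup, hqq]
      · rintro K ⟨hlt, hpr, hqp⟩
        have hKcard : Nat.card K = p * A.relIndex K := by
          rw [← card_mul_relindex hlt.le, hA]
        have hBcard := card_inf_tors hp hpr (Ne.symm hqp) hKcard
        refine ⟨K ⊓ torsSub G (A.relIndex K), ⟨by rw [hBcard]; exact hpr, by rw [hBcard]; exact hqp⟩, ?_⟩
        simp only
        have hle : A ⊔ (K ⊓ torsSub G (A.relIndex K)) ≤ K := sup_le hlt.le inf_le_left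
        refine sub_eq_of_le_of_card_le hle ?_
        rw [hKcard, card_sup_of_coprime_primes hp hpr (Ne.symm hqp) hA hBcard]
    rw [← hbij.image_eq, Set.ncard_image_of_injOn hbij.injOn]
  -- regularity gives the key equation
  have e1 := hd ⊥
  have e2 := hd A
  rw [hbot] at e1
  rw [hAnb, hWSo] at e2
  have hnpc : {B : Subgroup G | Nat.card B = p}.ncard
      = 1 + {K : Subgroup G | Nat.card K = p ^ 2 ∧ A ≤ K}.ncard := by omega
  -- counting elements
  have hT1 := card_tors_eq G hp
  obtain ⟨r, hr⟩ := torsSub_card_pow G hp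
  have hT2 := card_tors_eq (G ⧸ A) hp
  obtain ⟨r', hr'⟩ := torsSub_card_pow (G ⧸ A) hp
  have hth := theta hp hA
  rw [hr] at hT1
  rw [hr'] at hT2
  have h1lt : 1 < p ^ r := by
    rw [← hr]
    exact torsSub_nontrivial G hp (dvd_trans (dvd_mul_right p p) (by rwa [Nat.card_eq_fintype_card] at hsq ⊢))
  have hqcard : Nat.card G = Nat.card (G ⧸ A) * p := by
    rw [Subgroup.card_eq_card_quotient_mul_card_subgroup A, hA]
  have hpQ : p ∣ Nat.card (G ⧸ A) := by
    have hh : p * p ∣ Nat.card (G ⧸ A) * p := hqcard ▸ hsq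
    exact Nat.dvd_of_mul_dvd_mul_right hp.pos hh
  have : Fintype (G ⧸ A) := Fintype.ofFinite _
  have h1lt' : 1 < p ^ r' := by
    rw [← hr']
    exact torsSub_nontrivial (G ⧸ A) hp hpQ
  have hr1 : 1 ≤ r := by by_contra hcon; rw [show r = 0 by omega, pow_zero] at h1lt; omega
  have hr1' : 1 ≤ r' := by by_contra hcon; rw [show r' = 0 by omega, pow_zero] at h1lt'; omega
  generalize hgen : p - 1 = pm at hT1 hT2
  have hkey : p ^ r = pm + p ^ r' := by
    rw [hT1, hnpc, hth, hT2]; ring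
  have hdp : p ∣ p ^ r := dvd_pow_self p (by omega)
  have hdp' : p ∣ p ^ r' := dvd_pow_self p (by omega)
  have hfin : p ∣ pm := by
    have h2 := Nat.dvd_sub hdp hdp'
    rwa [show p ^ r - p ^ r' = pm by omega] at h2
  have := Nat.le_of_dvd (by omega) hfin
  omega

end MainA

section PartB

lemma squarefree_dvd_of_prime_dvd {d e : ℕ} (hd : Squarefree d) (he : e ≠ 0)
    (h : ∀ q : ℕ, q.Prime → q ∣ d → q ∣ e) : d ∣ e := by
  rw [← Nat.factorization_le_iff_dvd hd.ne_zero he, Finsupp.le_def]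
  intro q
  by_cases hq : q.Prime
  · by_cases hqd : q ∣ d
    · have h1 := hd.natFactorization_le_one q
      have h2 := Nat.Prime.factorization_pos_of_dvd hq he (h q hq hqd)
      omega
    · rw [Nat.factorization_eq_zero_of_not_dvd hqd]
      exact Nat.zero_le _
  · rw [Nat.factorization_eq_zero_of_not_prime _ hq]
    exact Nat.zero_le _

lemma isCyclic_of_squarefree_card {G : Type*} [CommGroup G] [Fintype G]
    (hsf : Squarefree (Nat.card G)) : IsCyclic G := by
  apply IsCyclic.of_exponent_eq_card
  have hne : Monoid.exponent G ≠ 0 := Monoid.exponent_ne_zero_of_finite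
  have hdvd : Monoid.exponent G ∣ Nat.card G := by
    rw [Nat.card_eq_fintype_card]; exact Group.exponent_dvd_card
  refine Nat.dvd_antisymm hdvd ?_
  refine squarefree_dvd_of_prime_dvd hsf hne ?_
  intro p hp hpd
  have : Fact p.Prime := ⟨hp⟩
  obtain ⟨x, hx⟩ := exists_prime_orderOf_dvd_card (G := G) p
    (by rwa [← Nat.card_eq_fintype_card])
  exact hx ▸ Monoid.order_dvd_exponent x

variable {G : Type*} [CommGroup G] [Fintype G] [IsCyclic G]

lemma subgroup_eq_tors (H : Subgroup G) : H = torsSub G (Nat.card H) := by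
  have hle : H ≤ torsSub G (Nat.card H) := fun x hx => pow_card_mem_eq_one hx
  refine sub_eq_of_le_of_card_le hle ?_
  have h0 : 0 < Nat.card H := Nat.card_pos
  have hle2 : {x : G | x ^ (Nat.card H) = 1}.ncard ≤ Nat.card H := by
    classical
    rw [Set.ncard_eq_toFinset_card', Set.toFinset_setOf]
    simpa using IsCyclic.card_pow_eq_one_le (α := G) h0
  calc Nat.card (torsSub G (Nat.card H))
      = Nat.card {x : G // x ^ (Nat.card H) = 1} :=
        Nat.card_congr (Equiv.subtypeEquivRight fun x => Iff.rfl)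
    _ = {x : G | x ^ (Nat.card H) = 1}.ncard := Nat.card_coe_set_eq _
    _ ≤ Nat.card H := hle2

lemma subgroup_card_inj {H K : Subgroup G} (h : Nat.card H = Nat.card K) : H = K := by
  rw [subgroup_eq_tors H, subgroup_eq_tors K, h]

lemma le_iff_card_dvd (H K : Subgroup G) : H ≤ K ↔ Nat.card H ∣ Nat.card K := by
  constructor
  · exact Subgroup.card_dvd_of_le
  · intro hdvd x hx
    have hx1 : x ^ Nat.card H = 1 := pow_card_mem_eq_one hx
    have hx2 : x ^ Nat.card K = 1 := by
      obtain ⟨c, hc⟩ := hdvd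
      rw [hc, pow_mul, hx1, one_pow]
    rw [subgroup_eq_tors K]
    exact hx2

lemma exists_subgroup_card {d : ℕ} (hd : d ∣ Nat.card G) :
    ∃ H : Subgroup G, Nat.card H = d := by
  obtain ⟨g, hg⟩ := IsCyclic.exists_generator (α := G)
  have hord : orderOf g = Nat.card G := orderOf_eq_card_of_forall_mem_zpowers hg
  have hpos : 0 < Nat.card G := Nat.card_pos
  have hdpos : 0 < d := by
    rcases Nat.eq_zero_or_pos d with rfl | hdpos
    · rw [Nat.eq_zero_of_zero_dvd hd] at hpos; omega
    · exact hdpos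
  obtain ⟨c, hc⟩ := hd
  have hcpos : 0 < c := by
    rcases Nat.eq_zero_or_pos c with rfl | hcpos
    · rw [hc, mul_zero] at hpos; omega
    · exact hcpos
  refine ⟨Subgroup.zpowers (g ^ (Nat.card G / d)), ?_⟩
  rw [Nat.card_zpowers, orderOf_pow, hord, hc, Nat.mul_div_cancel_left c hdpos,
    Nat.gcd_eq_right (dvd_mul_left c d), Nat.mul_div_cancel d hcpos]

lemma fin2_eq_cases (x : Fin 2) : x = 0 ∨ x = 1 := by
  rcases x with ⟨v, hv⟩
  interval_cases v
  · exact Or.inl rfl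
  · exact Or.inr rfl

lemma fin2_adj {a b : Fin 2} (h : (SimpleGraph.pathGraph 2).Adj a b) :
    (a = 0 ∧ b = 1) ∨ (a = 1 ∧ b = 0) := by
  rw [SimpleGraph.pathGraph_adj] at h
  have ha := a.isLt
  have hb := b.isLt
  rcases h with h | h
  · left
    constructor <;> (apply Fin.ext; simp only [Fin.val_zero, Fin.val_one]; omega)
  · right
    constructor <;> (apply Fin.ext; simp only [Fin.val_zero, Fin.val_one]; omega)

lemma hypercube_adj {s : ℕ} {a b : Fin s → Fin 2} :
    (hypercubeGraph s).Adj a b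
      ↔ ∃ i, (SimpleGraph.pathGraph 2).Adj (a i) (b i) ∧ ∀ j, j ≠ i → a j = b j :=
  Iff.rfl

lemma iso_hypercube (hsf : Squarefree (Nat.card G)) :
    Nonempty (primeIndexGraph G ≃g hypercubeGraph (Nat.card G).primeFactors.card) := by
  classical
  set n := Nat.card G with hn
  have hn0 : n ≠ 0 := hsf.ne_zero
  set s := n.primeFactors.card with hs
  obtain ⟨eP⟩ : Nonempty (Fin s ≃ n.primeFactors) :=
    ⟨(Fintype.equivFinOfCardEq (Fintype.card_coe _)).symm⟩
  have hPmem : ∀ i : Fin s, ((eP i : ℕ)).Prime ∧ (eP i : ℕ) ∣ n := by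
    intro i
    have h2 := (eP i).2
    rw [Nat.mem_primeFactors] at h2
    exact ⟨h2.1, h2.2.1⟩
  set φ : Subgroup G → (Fin s → Fin 2) :=
    fun H i => if (eP i : ℕ) ∣ Nat.card H then 1 else 0 with hφ
  have hcard_dvd : ∀ H : Subgroup G, Nat.card H ∣ n := fun H => Subgroup.card_subgroup_dvd_card H
  -- injectivity
  have hinj : Function.Injective φ := by
    intro H K hHK
    have hiff : ∀ i : Fin s, ((eP i : ℕ) ∣ Nat.card H ↔ (eP i : ℕ) ∣ Nat.card K) := by
      intro i
      have hthis := congrFun hHK i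
      simp only [hφ] at hthis
      constructor
      · intro h1
        by_contra h2
        rw [if_pos h1, if_neg h2] at hthis
        exact absurd hthis (by decide)
      · intro h2
        by_contra h1
        rw [if_neg h1, if_pos h2] at hthis
        exact absurd hthis (by decide)
    have hsub : ∀ L M : Subgroup G,
        (∀ i : Fin s, ((eP i : ℕ) ∣ Nat.card L → (eP i : ℕ) ∣ Nat.card M)) →
        Nat.card L ∣ Nat.card M := by
      intro L M hLM
      refine squarefree_dvd_of_prime_dvd (hsf.squarefree_of_dvd (hcard_dvd L))
        Nat.card_pos.ne' ?_
      intro q hq hqL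
      have hqn : q ∈ n.primeFactors :=
        Nat.mem_primeFactors.mpr ⟨hq, hqL.trans (hcard_dvd L), hn0⟩
      have hval : (eP (eP.symm ⟨q, hqn⟩) : ℕ) = q := by rw [Equiv.apply_symm_apply]
      have := hLM (eP.symm ⟨q, hqn⟩) (by rw [hval]; exact hqL)
      rwa [hval] at this
    exact subgroup_card_inj (Nat.dvd_antisymm
      (hsub H K (fun i => (hiff i).mp)) (hsub K H (fun i => (hiff i).mpr)))
  -- surjectivity
  have hsurj : Function.Surjective φ := by
    intro v
    set S : Finset ℕ :=
      (n.primeFactors.attach.filter (fun q => v (eP.symm q) = 1)).image Subtype.val with hS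
    have hSsub : S ⊆ n.primeFactors := by
      intro q hq
      simp only [hS, Finset.mem_image, Finset.mem_filter, Finset.mem_attach, true_and] at hq
      obtain ⟨q', -, rfl⟩ := hq
      exact q'.2
    have hddvd : (∏ p ∈ S, p) ∣ n := by
      calc (∏ p ∈ S, p) ∣ ∏ p ∈ n.primeFactors, p :=
            Finset.prod_dvd_prod_of_subset _ _ _ hSsub
        _ = n := Nat.prod_primeFactors_of_squarefree hsf
    have hd0 : (∏ p ∈ S, p) ≠ 0 := by
      intro h0
      rw [h0] at hddvd
      exact hn0 (Nat.eq_zero_of_zero_dvd hddvd)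
    obtain ⟨H, hH⟩ := exists_subgroup_card (G := G) hddvd
    refine ⟨H, ?_⟩
    funext i
    have hprimesS : ∀ p ∈ S, p.Prime := fun p hp => Nat.prime_of_mem_primeFactors (hSsub hp)
    have hfact : (∏ p ∈ S, p).primeFactors = S := Nat.primeFactors_prod hprimesS
    have hmemiff : ∀ q : ℕ, q.Prime → (q ∣ Nat.card H ↔ q ∈ S) := by
      intro q hq
      rw [hH]
      constructor
      · intro hdvd
        have hmem : q ∈ (∏ p ∈ S, p).primeFactors :=
          Nat.mem_primeFactors.mpr ⟨hq, hdvd, hd0⟩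
        rwa [hfact] at hmem
      · intro hqS
        exact Finset.dvd_prod_of_mem _ hqS
    simp only [hφ]
    by_cases hv : (eP i : ℕ) ∣ Nat.card H
    · rw [if_pos hv]
      have hqS := (hmemiff _ (hPmem i).1).mp hv
      simp only [hS, Finset.mem_image, Finset.mem_filter, Finset.mem_attach, true_and] at hqS
      obtain ⟨q', hq', hval⟩ := hqS
      have hq'eq : q' = eP i := Subtype.ext hval
      rw [hq'eq, Equiv.symm_apply_apply] at hq'
      exact hq'.symm
    · rw [if_neg hv]
      rcases fin2_eq_cases (v i) with hv0 | hv1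
      · exact hv0.symm
      · exfalso
        apply hv
        refine (hmemiff _ (hPmem i).1).mpr ?_
        simp only [hS, Finset.mem_image, Finset.mem_filter, Finset.mem_attach, true_and]
        exact ⟨eP i, by rw [Equiv.symm_apply_apply]; exact hv1, rfl⟩
  -- forward adjacency (the ≤ case)
  have haux : ∀ H K : Subgroup G, H ≤ K → (H.relIndex K).Prime →
      ∃ i, (SimpleGraph.pathGraph 2).Adj (φ H i) (φ K i) ∧ ∀ j, j ≠ i → φ H j = φ K j := by
    intro H K hle hpr
    have hcard : Nat.card K = Nat.card H * H.relIndex K := (card_mul_relindex hle).symm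
    have hqK : H.relIndex K ∣ Nat.card K := Dvd.intro_left _ hcard.symm
    have hqn : H.relIndex K ∈ n.primeFactors :=
      Nat.mem_primeFactors.mpr ⟨hpr, hqK.trans (hcard_dvd K), hn0⟩
    set i := eP.symm ⟨H.relIndex K, hqn⟩ with hi
    have hePi : (eP i : ℕ) = H.relIndex K := by rw [hi, Equiv.apply_symm_apply]
    have hqH : ¬ (H.relIndex K) ∣ Nat.card H := by
      intro hdvd
      refine Nat.squarefree_iff_prime_squarefree.mp hsf _ hpr ?_
      exact dvd_trans (mul_dvd_mul hdvd dvd_rfl) (hcard ▸ hcard_dvd K)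
    refine ⟨i, ?_, ?_⟩
    · have h0 : φ H i = 0 := by simp only [hφ]; rw [if_neg (by rw [hePi]; exact hqH)]
      have h1 : φ K i = 1 := by simp only [hφ]; rw [if_pos (by rw [hePi]; exact hqK)]
      rw [h0, h1, SimpleGraph.pathGraph_adj]
      exact Or.inl rfl
    · intro j hj
      have hvalne : (eP j : ℕ) ≠ H.relIndex K := by
        intro hval
        exact hj (eP.injective (Subtype.ext (by rw [hval, hePi])))
      simp only [hφ]
      by_cases hd : (eP j : ℕ) ∣ Nat.card H
      · rw [if_pos hd, if_pos (hd.trans ⟨H.relIndex K, hcard⟩)]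
      · have hdK : ¬ (eP j : ℕ) ∣ Nat.card K := by
          intro hdK
          rw [hcard] at hdK
          rcases (Nat.Prime.dvd_mul (hPmem j).1).mp hdK with hcase | hcase
          · exact hd hcase
          · exact hvalne ((Nat.prime_dvd_prime_iff_eq (hPmem j).1 hpr).mp hcase)
        rw [if_neg hd, if_neg hdK]
  -- backward adjacency (the 0-1 case)
  have hback : ∀ H K : Subgroup G, ∀ i : Fin s, φ H i = 0 → φ K i = 1 →
      (∀ j, j ≠ i → φ H j = φ K j) → (primeIndexGraph G).Adj H K := by
    intro H K i h0 h1 heq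
    have hq : ((eP i : ℕ)).Prime := (hPmem i).1
    have hqH : ¬ (eP i : ℕ) ∣ Nat.card H := by
      intro hdvd
      simp only [hφ] at h0
      rw [if_pos hdvd] at h0
      exact absurd h0 (by decide)
    have hqK : (eP i : ℕ) ∣ Nat.card K := by
      by_contra hdvd
      simp only [hφ] at h1
      rw [if_neg hdvd] at h1
      exact absurd h1 (by decide)
    have hjiff : ∀ j, j ≠ i → ((eP j : ℕ) ∣ Nat.card H ↔ (eP j : ℕ) ∣ Nat.card K) := by
      intro j hj
      have hthis := heq j hj
      simp only [hφ] at hthis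
      constructor
      · intro hd
        by_contra hd2
        rw [if_pos hd, if_neg hd2] at hthis
        exact absurd hthis (by decide)
      · intro hd
        by_contra hd2
        rw [if_neg hd2, if_pos hd] at hthis
        exact absurd hthis (by decide)
    have hidx : ∀ q : ℕ, q.Prime → q ∣ n → q ≠ (eP i : ℕ) →
        ((q ∣ Nat.card H) ↔ (q ∣ Nat.card K)) := by
      intro q hqp hqn hne
      have hqmem : q ∈ n.primeFactors := Nat.mem_primeFactors.mpr ⟨hqp, hqn, hn0⟩
      have hval : (eP (eP.symm ⟨q, hqmem⟩) : ℕ) = q := by rw [Equiv.apply_symm_apply]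
      have hjne : eP.symm ⟨q, hqmem⟩ ≠ i := by
        intro hcon
        rw [hcon] at hval
        exact hne hval.symm
      have := hjiff _ hjne
      rwa [hval] at this
    have hHK : Nat.card H ∣ Nat.card K := by
      refine squarefree_dvd_of_prime_dvd (hsf.squarefree_of_dvd (hcard_dvd H))
        Nat.card_pos.ne' ?_
      intro q hqp hqL
      have hne : q ≠ (eP i : ℕ) := by
        intro hcon
        exact hqH (hcon ▸ hqL)
      exact (hidx q hqp (hqL.trans (hcard_dvd H)) hne).mp hqL
    have hKH : Nat.card K ∣ Nat.card H * (eP i : ℕ) := by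
      refine squarefree_dvd_of_prime_dvd (hsf.squarefree_of_dvd (hcard_dvd K))
        (Nat.mul_ne_zero Nat.card_pos.ne' hq.pos.ne') ?_
      intro q hqp hqK'
      by_cases hqq : q = (eP i : ℕ)
      · rw [hqq]
        exact dvd_mul_left _ _
      · exact dvd_mul_of_dvd_left
          ((hidx q hqp (hqK'.trans (hcard_dvd K)) hqq).mpr hqK') _
    have hcop : (Nat.card H).Coprime (eP i : ℕ) :=
      Nat.Coprime.symm (hq.coprime_iff_not_dvd.mpr hqH)
    have hmul : Nat.card H * (eP i : ℕ) ∣ Nat.card K :=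
      Nat.Coprime.mul_dvd_of_dvd_of_dvd hcop hHK hqK
    have hcardK : Nat.card K = Nat.card H * (eP i : ℕ) := Nat.dvd_antisymm hKH hmul
    have hle : H ≤ K := (le_iff_card_dvd H K).mpr hHK
    have hrel : H.relIndex K = (eP i : ℕ) := by
      have hm := card_mul_relindex hle
      rw [hcardK] at hm
      exact Nat.eq_of_mul_eq_mul_left Nat.card_pos hm
    have hne : H ≠ K := by
      intro hcon
      rw [hcon] at hqH
      exact hqH hqK
    show (SimpleGraph.fromRel _).Adj H K
    rw [SimpleGraph.fromRel_adj]
    exact ⟨hne, Or.inl ⟨hle, by rw [hrel]; exact hq⟩⟩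
  -- assemble the isomorphism
  refine ⟨⟨Equiv.ofBijective φ ⟨hinj, hsurj⟩, ?_⟩⟩
  intro H K
  show (hypercubeGraph s).Adj (φ H) (φ K) ↔ (primeIndexGraph G).Adj H K
  constructor
  · intro hadj
    obtain ⟨i, hP, heq⟩ := hypercube_adj.mp hadj
    rcases fin2_adj hP with ⟨h0, h1⟩ | ⟨h1, h0⟩
    · exact hback H K i h0 h1 heq
    · exact (hback K H i h0 h1 (fun j hj => (heq j hj).symm)).symm
  · intro hadj
    have hadj' := hadj
    rw [show primeIndexGraph G = SimpleGraph.fromRel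
      (fun H K => H ≤ K ∧ (H.relIndex K).Prime) from rfl, SimpleGraph.fromRel_adj] at hadj'
    obtain ⟨hne, hcase | hcase⟩ := hadj'
    · obtain ⟨i, h1, h2⟩ := haux H K hcase.1 hcase.2
      exact hypercube_adj.mpr ⟨i, h1, h2⟩
    · obtain ⟨i, h1, h2⟩ := haux K H hcase.1 hcase.2
      exact hypercube_adj.mpr ⟨i, h1.symm, fun j hj => (h2 j hj).symm⟩

end PartB

theorem primeIndexGraph_regular_abelian (G : Type*) [CommGroup G] [Fintype G]
    (h : ∃ d : ℕ, ∀ H : Subgroup G, ((primeIndexGraph G).neighborSet H).ncard = d) :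
    IsCyclic G ∧ Squarefree (Nat.card G) ∧
      Nonempty (primeIndexGraph G ≃g hypercubeGraph (Nat.card G).primeFactors.card) := by
  have hsf : Squarefree (Nat.card G) :=
    Nat.squarefree_iff_prime_squarefree.mpr (fun p hp => not_sq_dvd h hp)
  have hcyc : IsCyclic G := isCyclic_of_squarefree_card hsf
  exact ⟨hcyc, hsf, iso_hypercube hsf⟩
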